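/- If F and G are Parseval frames for Z_2^n and U = Θ_G^* Θ_F, then U is unitary whenever G_F = G_G, and moreover U Θ_F^* = Θ_G^*. -/

import Mathlib

open Matrix

theorem binary_canonical_unitary (n k : ℕ)
    (f g : Fin k → (Fin n → ZMod 2))
    (hF : (Matrix.of f)ᵀ * Matrix.of f = 1)
    (hG : (Matrix.of g)ᵀ * Matrix.of g = 1)
    (hGram : Matrix.of f * (Matrix.of f)ᵀ = Matrix.of g * (Matrix.of g)ᵀ) :
    (IsUnit ((Matrix.of g)ᵀ * Matrix.of f) ∧
      ((Matrix.of g)ᵀ * Matrix.of f)⁻¹ = ((Matrix.of g)ᵀ * Matrix.of f)ᵀ) ∧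
    ((Matrix.of g)ᵀ * Matrix.of f) * (Matrix.of f)ᵀ = (Matrix.of g)ᵀ := by
  have h1 : ((Matrix.of g)ᵀ * Matrix.of f)ᵀ * ((Matrix.of g)ᵀ * Matrix.of f) = 1 := by
    rw [Matrix.transpose_mul, Matrix.transpose_transpose]
    calc (Matrix.of f)ᵀ * Matrix.of g * ((Matrix.of g)ᵀ * Matrix.of f)
        = (Matrix.of f)ᵀ * (Matrix.of g * (Matrix.of g)ᵀ) * Matrix.of f := by
          simp [Matrix.mul_assoc]
      _ = (Matrix.of f)ᵀ * (Matrix.of f * (Matrix.of f)ᵀ) * Matrix.of f := by rw [hGram]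
      _ = ((Matrix.of f)ᵀ * Matrix.of f) * ((Matrix.of f)ᵀ * Matrix.of f) := by
          simp [Matrix.mul_assoc]
      _ = 1 := by rw [hF, one_mul]
  refine ⟨⟨(Matrix.isUnit_iff_isUnit_det _).2 (Matrix.isUnit_det_of_left_inverse h1), Matrix.inv_eq_left_inv h1⟩, ?_⟩
  calc (Matrix.of g)ᵀ * Matrix.of f * (Matrix.of f)ᵀ
      = (Matrix.of g)ᵀ * (Matrix.of f * (Matrix.of f)ᵀ) := by rw [Matrix.mul_assoc]
    _ = (Matrix.of g)ᵀ * (Matrix.of g * (Matrix.of g)ᵀ) := by rw [hGram]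
    _ = ((Matrix.of g)ᵀ * Matrix.of g) * (Matrix.of g)ᵀ := by rw [Matrix.mul_assoc]
    _ = (Matrix.of g)ᵀ := by rw [hG, Matrix.one_mul]
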